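/- LRF is the largest respectful function: if F is any respectful function, then F(R) ⊆ LRF(R) for every binary relation R on the states. -/

import Mathlib

universe u v

/-- `Progress Tr R S` means relation `R` progresses to relation `S`
in the labelled transition system with transition relation `Tr`. -/
def Progress {St : Type u} {Δ : Type v} (Tr : St → Δ → St → Prop)
    (R S : Set (St × St)) : Prop :=
  ∀ p q, (p, q) ∈ R →
    (∀ a p', Tr p a p' → ∃ q', Tr q a q' ∧ (p', q') ∈ S) ∧
    (∀ a q', Tr q a q' → ∃ p', Tr p a p' ∧ (p', q') ∈ S)

/-- A function on relations is respectful if whenever `R ⊆ S` and `R ⤳ S`,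
also `F R ⊆ F S` and `F R ⤳ F S`. -/
def Respectful {St : Type u} {Δ : Type v} (Tr : St → Δ → St → Prop)
    (F : Set (St × St) → Set (St × St)) : Prop :=
  ∀ R S : Set (St × St), R ⊆ S → Progress Tr R S →
    F R ⊆ F S ∧ Progress Tr (F R) (F S)

/-- Milner's stratification of bisimilarity: `∼₀ = univ`,
`∼_{α+1} = ⋃ {X | X ⤳ ∼_α}`, `∼_λ = ⋂_{β<λ} ∼_β` for limits. -/
noncomputable def Strat {St : Type u} {Δ : Type v} (Tr : St → Δ → St → Prop)
    (α : Ordinal.{w}) : Set (St × St) :=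
  Ordinal.limitRecOn α
    Set.univ
    (fun _ ih => ⋃₀ {X | Progress Tr X ih})
    (fun o _ ih => ⋂ (β : Ordinal.{w}) (h : β < o), ih β h)


theorem Strat_zero {St : Type u} {Δ : Type v} (Tr : St → Δ → St → Prop) :
    Strat.{u,v,w} Tr 0 = Set.univ := by
  simp [Strat, Ordinal.limitRecOn_zero]

theorem Strat_succ {St : Type u} {Δ : Type v} (Tr : St → Δ → St → Prop) (α : Ordinal.{w}) :
    Strat Tr (Order.succ α) = ⋃₀ {X | Progress Tr X (Strat Tr α)} := by
  simp [Strat, Ordinal.limitRecOn_succ]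

theorem Strat_limit {St : Type u} {Δ : Type v} (Tr : St → Δ → St → Prop) (α : Ordinal.{w})
    (h : Order.IsSuccLimit α) :
    Strat Tr α = ⋂ (β : Ordinal.{w}) (_ : β < α), Strat Tr β := by
  simp [Strat, Ordinal.limitRecOn_limit _ _ _ _ h]

theorem Progress.mono {St : Type u} {Δ : Type v} {Tr : St → Δ → St → Prop}
    {R' R S S' : Set (St × St)} (hR : R' ⊆ R) (hS : S ⊆ S')
    (h : Progress Tr R S) : Progress Tr R' S' := by
  intro p q hpq
  obtain ⟨h1, h2⟩ := h p q (hR hpq)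
  refine ⟨fun a p' ht => ?_, fun a q' ht => ?_⟩
  · obtain ⟨q', htq, hmem⟩ := h1 a p' ht; exact ⟨q', htq, hS hmem⟩
  · obtain ⟨p', htp, hmem⟩ := h2 a q' ht; exact ⟨p', htp, hS hmem⟩

theorem Strat_succ_progress {St : Type u} {Δ : Type v} (Tr : St → Δ → St → Prop)
    (α : Ordinal.{w}) : Progress Tr (Strat Tr (Order.succ α)) (Strat Tr α) := by
  rw [Strat_succ]
  rintro p q ⟨X, hX, hpq⟩
  exact hX p q hpq

/-- Key lemma: anything that progresses to `Strat α` is contained in `Strat α`. -/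
theorem Strat_key {St : Type u} {Δ : Type v} (Tr : St → Δ → St → Prop) :
    ∀ α : Ordinal.{w}, ∀ X : Set (St × St), Progress Tr X (Strat Tr α) → X ⊆ Strat Tr α := by
  intro α
  induction α using Ordinal.induction with
  | h α IH =>
    rcases Ordinal.zero_or_succ_or_isSuccLimit α with h0 | ⟨γ, hγ⟩ | hlim
    · subst h0; intro X _; rw [Strat_zero]; exact Set.subset_univ X
    · subst hγ
      intro X hX
      have hsub : Strat Tr (Order.succ γ) ⊆ Strat Tr γ :=
        IH γ (Order.lt_succ γ) _ (Strat_succ_progress Tr γ)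
      have : Progress Tr X (Strat Tr γ) := Progress.mono (le_refl X) hsub hX
      rw [Strat_succ]
      exact Set.subset_sUnion_of_mem this
    · intro X hX
      rw [Strat_limit Tr α hlim]
      refine Set.subset_iInter fun β => Set.subset_iInter fun hβ => ?_
      have hsub : Strat Tr α ⊆ Strat Tr β := by
        rw [Strat_limit Tr α hlim]
        exact Set.iInter_subset_of_subset β (Set.iInter_subset _ hβ)
      exact IH β hβ X (Progress.mono (le_refl X) hsub hX)

theorem Strat_succ_subset {St : Type u} {Δ : Type v} (Tr : St → Δ → St → Prop)
    (α : Ordinal.{w}) : Strat Tr (Order.succ α) ⊆ Strat Tr α :=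
  Strat_key Tr α _ (Strat_succ_progress Tr α)

/-- `LRF R = ⋂ {∼_α | R ⊆ ∼_α}`. -/
noncomputable def LRF {St : Type u} {Δ : Type v} (Tr : St → Δ → St → Prop)
    (R : Set (St × St)) : Set (St × St) :=
  ⋂ (α : Ordinal.{u}) (_ : R ⊆ Strat.{u, v, u} Tr α), Strat.{u, v, u} Tr α

theorem lrf_largest {St : Type u} {Δ : Type v} (Tr : St → Δ → St → Prop)
    (F : Set (St × St) → Set (St × St)) (hF : Respectful Tr F) :
    ∀ R : Set (St × St), F R ⊆ LRF Tr R := by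
  have main : ∀ α : Ordinal.{u}, ∀ R : Set (St × St),
      R ⊆ Strat.{u,v,u} Tr α → F R ⊆ Strat.{u,v,u} Tr α := by
    intro α
    induction α using Ordinal.induction with
    | h α IH =>
      intro R hR
      rcases Ordinal.zero_or_succ_or_isSuccLimit α with h0 | ⟨γ, hγ⟩ | hlim
      · subst h0; rw [Strat_zero]; exact Set.subset_univ _
      · subst hγ
        have hRγ : R ⊆ Strat Tr γ := hR.trans (Strat_succ_subset Tr γ)
        have hRprog : Progress Tr R (Strat Tr γ) :=
          Progress.mono hR (le_refl _) (Strat_succ_progress Tr γ)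
        obtain ⟨hsub, hprog⟩ := hF R (Strat Tr γ) hRγ hRprog
        have hFγ : F (Strat Tr γ) ⊆ Strat Tr γ :=
          IH γ (Order.lt_succ γ) (Strat Tr γ) (le_refl _)
        have : Progress Tr (F R) (Strat Tr γ) := Progress.mono (le_refl _) hFγ hprog
        rw [Strat_succ]
        exact Set.subset_sUnion_of_mem this
      · rw [Strat_limit Tr α hlim]
        refine Set.subset_iInter fun β => Set.subset_iInter fun hβ => ?_
        refine IH β hβ R (hR.trans ?_)
        rw [Strat_limit Tr α hlim]
        exact Set.iInter_subset_of_subset β (Set.iInter_subset _ hβ)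
  intro R
  simp only [LRF, Set.subset_iInter_iff]
  exact fun α hα => main α R hα
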